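/- Let f' : GL(d,ℝ) → ℝ be an invariant function with variation function F', let ε₁,…,ε_k ∈ {±1}, and define f : GL(d,ℝ)^k → ℝ by f(g₁,…,g_k) = f'(g₁^{ε₁}·g₂^{ε₂}⋯g_k^{ε_k}); then f is an invariant function, and for every index i with ε_i = 1, its i-th variation function is given by F_i(g₁,…,g_k) = F'(g_i·g_{i+1}^{ε_{i+1}}⋯g_k^{ε_k}·g₁^{ε₁}⋯g_{i−1}^{ε_{i−1}}). -/

import Mathlib

open Matrix

attribute [local instance] Matrix.normedAddCommGroup Matrix.normedSpace

noncomputable section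

/-- An invariant multi-function on `GL(d,ℝ)^k`: a real-valued function on `k`-tuples of
`d × d` real matrices that is differentiable on the open set of tuples of invertible
matrices and invariant under the diagonal action of `GL(d,ℝ)` by conjugation. -/
def IsInvariantFun (d k : ℕ) (f : (Fin k → Matrix (Fin d) (Fin d) ℝ) → ℝ) : Prop :=
  DifferentiableOn ℝ f {g : Fin k → Matrix (Fin d) (Fin d) ℝ | ∀ i, IsUnit (g i)} ∧
  ∀ h : Matrix (Fin d) (Fin d) ℝ, IsUnit h →
    ∀ g : Fin k → Matrix (Fin d) (Fin d) ℝ, (∀ i, IsUnit (g i)) →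
      f (fun i => h * g i * h⁻¹) = f g

/-- `F` is the tuple of variation functions of `f` with respect to the trace form
`𝔅(X,Y) = tr (X*Y)`: the matrix `F j g` satisfies that `tr (F j g * X)` is the derivative
at `t = 0` of `t ↦ f (g₁, …, exp(tX)·g_j, …, g_k)`, for every `X`. -/
def IsVariationFun (d k : ℕ) (f : (Fin k → Matrix (Fin d) (Fin d) ℝ) → ℝ)
    (F : Fin k → (Fin k → Matrix (Fin d) (Fin d) ℝ) → Matrix (Fin d) (Fin d) ℝ) : Prop :=
  ∀ (j : Fin k) (g : Fin k → Matrix (Fin d) (Fin d) ℝ), (∀ i, IsUnit (g i)) →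
    ∀ X : Matrix (Fin d) (Fin d) ℝ,
      HasDerivAt
        (fun t : ℝ => f (Function.update g j (NormedSpace.exp (t • X) * g j)))
        (Matrix.trace (F j g * X)) 0

/-- An invariant function on `GL(d,ℝ)`: a real-valued function on `d × d` real matrices
that is differentiable on the open set of invertible matrices and invariant under
conjugation. -/
def IsInvariantFunOne (d : ℕ) (f : Matrix (Fin d) (Fin d) ℝ → ℝ) : Prop :=
  DifferentiableOn ℝ f {g : Matrix (Fin d) (Fin d) ℝ | IsUnit g} ∧
  ∀ h : Matrix (Fin d) (Fin d) ℝ, IsUnit h →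
    ∀ g : Matrix (Fin d) (Fin d) ℝ, IsUnit g → f (h * g * h⁻¹) = f g

/-- `F` is the variation function of `f : GL(d,ℝ) → ℝ` with respect to the trace form:
`tr (F g * X)` is the derivative at `t = 0` of `t ↦ f (exp(tX)·g)`, for every `X`. -/
def IsVariationFunOne (d : ℕ) (f : Matrix (Fin d) (Fin d) ℝ → ℝ)
    (F : Matrix (Fin d) (Fin d) ℝ → Matrix (Fin d) (Fin d) ℝ) : Prop :=
  ∀ g : Matrix (Fin d) (Fin d) ℝ, IsUnit g → ∀ X : Matrix (Fin d) (Fin d) ℝ,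
    HasDerivAt (fun t : ℝ => f (NormedSpace.exp (t • X) * g))
      (Matrix.trace (F g * X)) 0

/-- The word map `(g₁, …, g_k) ↦ g₁^{ε₁} · g₂^{ε₂} ⋯ g_k^{ε_k}` on tuples of matrices. -/
def wordProd {d k : ℕ} (ε : Fin k → ℤ) (g : Fin k → Matrix (Fin d) (Fin d) ℝ) :
    Matrix (Fin d) (Fin d) ℝ :=
  (List.ofFn fun i => g i ^ ε i).prod

section Aux

variable {d k : ℕ} {E : Type*} [NormedAddCommGroup E] [NormedSpace ℝ E]

local notation "Md" => Matrix (Fin d) (Fin d) ℝ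

lemma diffAt_matrix_iff {u : E → Md} {x : E} :
    DifferentiableAt ℝ u x ↔ ∀ i j, DifferentiableAt ℝ (fun y => u y i j) x := by
  exact differentiableAt_pi.trans (forall_congr' fun i => differentiableAt_pi)

lemma diffAt_prod {ι : Type*} {x : E} (s : Finset ι) (f : ι → E → ℝ)
    (h : ∀ i ∈ s, DifferentiableAt ℝ (f i) x) :
    DifferentiableAt ℝ (fun y => ∏ i ∈ s, f i y) x := by
  classical
  induction s using Finset.induction with
  | empty => simp only [Finset.prod_empty]; exact differentiableAt_const 1
  | insert _ _ hns ih =>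
    simp only [Finset.prod_insert hns]
    exact (h _ (Finset.mem_insert_self _ _)).mul
      (ih fun i hi => h i (Finset.mem_insert_of_mem hi))

lemma diffAt_det {u : E → Md} {x : E} (hu : DifferentiableAt ℝ u x) :
    DifferentiableAt ℝ (fun y => (u y).det) x := by
  rw [diffAt_matrix_iff] at hu
  simp only [Matrix.det_apply, Units.smul_def, zsmul_eq_mul]
  exact DifferentiableAt.fun_sum fun σ _ => (differentiableAt_const _).mul
    (diffAt_prod _ _ fun i _ => hu (σ i) i)

lemma diffAt_adjugate {u : E → Md} {x : E} (hu : DifferentiableAt ℝ u x) :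
    DifferentiableAt ℝ (fun y => (u y).adjugate) x := by
  rw [diffAt_matrix_iff] at hu
  rw [diffAt_matrix_iff]
  intro i j
  simp only [Matrix.adjugate_apply, Matrix.det_apply, Units.smul_def, zsmul_eq_mul,
    Matrix.updateRow_apply]
  apply DifferentiableAt.fun_sum
  intro σ _
  apply (differentiableAt_const _).mul
  apply diffAt_prod
  intro l _
  by_cases hc : σ l = j
  · simp only [hc, if_pos rfl]; exact differentiableAt_const _
  · simp only [if_neg hc]; exact hu (σ l) l

lemma diffAt_inv {u : E → Md} {x : E} (hu : DifferentiableAt ℝ u x)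
    (h : IsUnit (u x)) : DifferentiableAt ℝ (fun y => (u y)⁻¹) x := by
  have hdet : (u x).det ≠ 0 := ((Matrix.isUnit_iff_isUnit_det _).mp h).ne_zero
  have heq : (fun y => (u y)⁻¹) = fun y => ((u y).det)⁻¹ • (u y).adjugate := by
    funext y; rw [Matrix.inv_def, Ring.inverse_eq_inv']
  rw [heq, diffAt_matrix_iff]
  intro i j
  simp only [Matrix.smul_apply, smul_eq_mul]
  exact ((diffAt_det hu).inv hdet).mul
    ((diffAt_matrix_iff.mp (diffAt_adjugate hu)) i j)

lemma diffAt_matmul {u v : E → Md} {x : E}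
    (hu : DifferentiableAt ℝ u x) (hv : DifferentiableAt ℝ v x) :
    DifferentiableAt ℝ (fun y => u y * v y) x := by
  rw [diffAt_matrix_iff] at hu hv ⊢
  intro i j
  simp only [Matrix.mul_apply]
  exact DifferentiableAt.fun_sum fun l _ => (hu i l).mul (hv l j)

lemma diffAt_ofFn_prod {x : E} : ∀ {n : ℕ} (u : Fin n → E → Md),
    (∀ l, DifferentiableAt ℝ (u l) x) →
    DifferentiableAt ℝ (fun y => (List.ofFn fun l => u l y).prod) x := by
  intro n
  induction n with
  | zero => intro u _; simp only [List.ofFn_zero, List.prod_nil]; exact differentiableAt_const 1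
  | succ n ih =>
    intro u h
    simp only [List.ofFn_succ, List.prod_cons]
    exact diffAt_matmul (h 0) (ih _ fun l => h l.succ)

lemma trace_nondeg {A B : Md}
    (h : ∀ X : Md, Matrix.trace (A * X) = Matrix.trace (B * X)) : A = B := by
  ext i j
  have := h (Matrix.single j i 1)
  simpa [Matrix.trace, Matrix.diag, Matrix.mul_apply, Matrix.single,
    ite_and, Finset.sum_ite_eq, Finset.sum_ite_eq', eq_comm] using this

lemma isOpen_isUnit_matrix : IsOpen {g : Md | IsUnit g} := by
  have hdet : Continuous (fun A : Md => A.det) :=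
    continuous_iff_continuousAt.mpr fun A =>
      (diffAt_det (differentiableAt_id (x := A))).continuousAt
  have hs : {g : Md | IsUnit g} = (fun A : Md => A.det) ⁻¹' ({0}ᶜ) := by
    ext A
    simp [Matrix.isUnit_iff_isUnit_det, isUnit_iff_ne_zero]
  rw [hs]
  exact isOpen_compl_singleton.preimage hdet

lemma conj_zpow' {h a : Md} (hh : IsUnit h) {e : ℤ} (he : e = 1 ∨ e = -1) :
    (h * a * h⁻¹) ^ e = h * a ^ e * h⁻¹ := by
  have hd : IsUnit h.det := (Matrix.isUnit_iff_isUnit_det h).mp hh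
  rcases he with he | he
  · rw [he, zpow_one, zpow_one]
  · rw [he, Matrix.zpow_neg_one, Matrix.zpow_neg_one, Matrix.mul_inv_rev,
      Matrix.mul_inv_rev, Matrix.nonsing_inv_nonsing_inv _ hd, Matrix.mul_assoc]

lemma conj_list_prod {h : Md} (hh : IsUnit h) (l : List Md) :
    (l.map fun a => h * a * h⁻¹).prod = h * l.prod * h⁻¹ := by
  have hd : IsUnit h.det := (Matrix.isUnit_iff_isUnit_det h).mp hh
  induction l with
  | nil => simp [Matrix.mul_nonsing_inv _ hd]
  | cons a l ih =>
    simp only [List.map_cons, List.prod_cons, ih]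
    simp only [Matrix.mul_assoc]
    rw [← Matrix.mul_assoc h⁻¹ h, Matrix.nonsing_inv_mul _ hd, Matrix.one_mul]

lemma wordProd_conj {ε : Fin k → ℤ} (hε : ∀ i, ε i = 1 ∨ ε i = -1)
    {h : Md} (hh : IsUnit h) (g : Fin k → Md) :
    wordProd ε (fun l => h * g l * h⁻¹) = h * wordProd ε g * h⁻¹ := by
  unfold wordProd
  have h1 : (List.ofFn fun l => (h * g l * h⁻¹) ^ ε l) =
      (List.ofFn fun l => g l ^ ε l).map fun a => h * a * h⁻¹ := by
    rw [List.map_ofFn]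
    exact congrArg List.ofFn (funext fun l => conj_zpow' hh (hε l))
  rw [h1, conj_list_prod hh]

lemma isUnit_zpow {a : Md} (ha : IsUnit a) {e : ℤ} (he : e = 1 ∨ e = -1) :
    IsUnit (a ^ e) := by
  rcases he with he | he
  · rw [he, zpow_one]; exact ha
  · rw [he, Matrix.zpow_neg_one]; exact Matrix.isUnit_nonsing_inv_iff.mpr ha

lemma isUnit_wordProd {ε : Fin k → ℤ} (hε : ∀ i, ε i = 1 ∨ ε i = -1)
    {g : Fin k → Md} (hg : ∀ l, IsUnit (g l)) : IsUnit (wordProd ε g) := by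
  apply List.prod_isUnit
  intro m hm
  rw [List.mem_ofFn] at hm
  obtain ⟨l, rfl⟩ := hm
  exact isUnit_zpow (hg l) (hε l)

lemma ofFn_prod_split (w : Fin k → Md) (i : Fin k) :
    (List.ofFn w).prod =
      ((List.ofFn w).take (i : ℕ)).prod * (w i * ((List.ofFn w).drop ((i : ℕ) + 1)).prod) := by
  conv_lhs => rw [← List.take_append_drop (i : ℕ) (List.ofFn w)]
  rw [List.prod_append]
  congr 1
  rw [List.drop_eq_getElem_cons (by simp), List.prod_cons]
  congr 1
  simp [List.getElem_ofFn]

lemma take_ofFn_eq (w v : Fin k → Md) (i : Fin k) (hagree : ∀ l, l ≠ i → w l = v l) :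
    (List.ofFn w).take (i : ℕ) = (List.ofFn v).take (i : ℕ) := by
  apply List.ext_getElem (by simp)
  intro n h1 h2
  simp only [List.getElem_take, List.getElem_ofFn]
  apply hagree
  simp only [List.length_take, List.length_ofFn, lt_min_iff] at h1
  intro hc
  rw [Fin.ext_iff] at hc
  simp only [Fin.val_mk] at hc -- n = i
  omega

lemma drop_ofFn_eq (w v : Fin k → Md) (i : Fin k) (hagree : ∀ l, l ≠ i → w l = v l) :
    (List.ofFn w).drop ((i : ℕ) + 1) = (List.ofFn v).drop ((i : ℕ) + 1) := by
  apply List.ext_getElem (by simp)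
  intro n h1 h2
  simp only [List.getElem_drop, List.getElem_ofFn]
  apply hagree
  intro hc
  rw [Fin.ext_iff] at hc
  simp only [Fin.val_mk] at hc
  omega

end Aux

/-- if `f'` is an invariant function on `GL(d,ℝ)` with variation function `F'`,
`ε_i ∈ {±1}`, and `f (g₁,…,g_k) = f' (g₁^{ε₁} ⋯ g_k^{ε_k})`, then `f` is an invariant
multi-function, and for every index `i` with `ε_i = 1` its `i`-th variation function is
`F_i (g₁,…,g_k) = F' (g_i · g_{i+1}^{ε_{i+1}} ⋯ g_k^{ε_k} · g₁^{ε₁} ⋯ g_{i-1}^{ε_{i-1}})`. -/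
theorem variation_of_word_function_positive_exponent (d k : ℕ)
    (f' : Matrix (Fin d) (Fin d) ℝ → ℝ)
    (F' : Matrix (Fin d) (Fin d) ℝ → Matrix (Fin d) (Fin d) ℝ)
    (hf' : IsInvariantFunOne d f') (hF' : IsVariationFunOne d f' F')
    (ε : Fin k → ℤ) (hε : ∀ i, ε i = 1 ∨ ε i = -1) :
    IsInvariantFun d k (fun g => f' (wordProd ε g)) ∧
    ∀ F : Fin k → (Fin k → Matrix (Fin d) (Fin d) ℝ) → Matrix (Fin d) (Fin d) ℝ,
      IsVariationFun d k (fun g => f' (wordProd ε g)) F →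
        ∀ i : Fin k, ε i = 1 →
          ∀ g : Fin k → Matrix (Fin d) (Fin d) ℝ, (∀ l, IsUnit (g l)) →
            F i g = F' (g i * ((List.ofFn fun l => g l ^ ε l).drop ((i : ℕ) + 1)).prod *
              ((List.ofFn fun l => g l ^ ε l).take (i : ℕ)).prod) := by
  constructor
  · constructor
    · -- differentiability
      intro x hx
      apply DifferentiableAt.differentiableWithinAt
      have hword : DifferentiableAt ℝ (fun g : Fin k → Matrix (Fin d) (Fin d) ℝ =>
          wordProd ε g) x := by
        unfold wordProd
        refine diffAt_ofFn_prod (fun l (g : Fin k → Matrix (Fin d) (Fin d) ℝ) => g l ^ ε l)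
          fun l => ?_
        have hproj : DifferentiableAt ℝ
            (fun g : Fin k → Matrix (Fin d) (Fin d) ℝ => g l) x :=
          differentiableAt_pi.mp differentiableAt_id l
        rcases hε l with he | he
        · simp only [he, zpow_one]; exact hproj
        · simp only [he, Matrix.zpow_neg_one]
          exact diffAt_inv hproj (hx l)
      have hunit : IsUnit (wordProd ε x) := isUnit_wordProd hε hx
      exact DifferentiableAt.comp x
        ((hf'.1 _ hunit).differentiableAt (isOpen_isUnit_matrix.mem_nhds hunit)) hword
    · -- invariance
      intro h hh g hg
      simp only
      rw [wordProd_conj hε hh g, hf'.2 h hh _ (isUnit_wordProd hε hg)]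
  · intro F hF i hi g hg
    set T := ((List.ofFn fun l => g l ^ ε l).take (i : ℕ)).prod with hT
    set D := ((List.ofFn fun l => g l ^ ε l).drop ((i : ℕ) + 1)).prod with hD
    have hTu : IsUnit T := by
      apply List.prod_isUnit
      intro m hm
      have := List.mem_of_mem_take hm
      rw [List.mem_ofFn] at this
      obtain ⟨l, rfl⟩ := this
      exact isUnit_zpow (hg l) (hε l)
    have hDu : IsUnit D := by
      apply List.prod_isUnit
      intro m hm
      have := List.mem_of_mem_drop hm
      rw [List.mem_ofFn] at this
      obtain ⟨l, rfl⟩ := this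
      exact isUnit_zpow (hg l) (hε l)
    have hTd : IsUnit T.det := (Matrix.isUnit_iff_isUnit_det T).mp hTu
    set A := g i * D * T with hA
    have hAu : IsUnit A := ((hg i).mul hDu).mul hTu
    -- the word function equals t ↦ f' (exp(t•X) * A)
    have key : ∀ X : Matrix (Fin d) (Fin d) ℝ,
        (fun t : ℝ => f' (wordProd ε (Function.update g i (NormedSpace.exp (t • X) * g i))))
          = fun t : ℝ => f' (NormedSpace.exp (t • X) * A) := by
      intro X
      funext t
      set e := NormedSpace.exp (t • X) with he
      have heu : IsUnit e := Matrix.isUnit_exp (t • X)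
      have hsplit : wordProd ε (Function.update g i (e * g i)) = T * (e * g i * D) := by
        unfold wordProd
        rw [ofFn_prod_split (fun l => Function.update g i (e * g i) l ^ ε l) i]
        have hagree : ∀ l, l ≠ i →
            Function.update g i (e * g i) l ^ ε l = g l ^ ε l := by
          intro l hl
          rw [Function.update_of_ne hl]
        rw [take_ofFn_eq _ _ i hagree, drop_ofFn_eq _ _ i hagree,
          Function.update_self, hi, zpow_one, ← hT, ← hD, Matrix.mul_assoc]
      rw [hsplit]
      have hM : IsUnit (e * A) := heu.mul hAu
      have hconj : T * (e * A) * T⁻¹ = T * (e * g i * D) := by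
        rw [hA]
        simp only [Matrix.mul_assoc]
        rw [Matrix.mul_nonsing_inv _ hTd, Matrix.mul_one]
      calc f' (T * (e * g i * D)) = f' (T * (e * A) * T⁻¹) := by rw [hconj]
        _ = f' (e * A) := hf'.2 T hTu _ hM
    apply trace_nondeg
    intro X
    have h1 := hF i g hg X
    simp only at h1
    rw [key X] at h1
    exact h1.unique (hF' A hAu X)
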